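/- Let p ∈ ℝ² be a boundary point of R ⊕ D, where R ⊆ ℝ² is any set and D is the closed unit disk, such that p ∈ ∂D_q for some q ∈ R (D_q the closed unit disk centered at q). Let σ be a circle through p such that an arc of σ containing p lies on ∂(R ⊕ D). Then σ and the circle ∂D_q are tangent at p, i.e., they have the same tangent line at p. -/

import Mathlib

open scoped Pointwise RealInnerProductSpace
noncomputable section

abbrev Pt := EuclideanSpace ℝ (Fin 2)

/-- The closed unit disk centered at the origin. -/
def unitDisk : Set Pt := Metric.closedBall 0 1

/-- Let `p` be a boundary point of `R ⊕ D` with `p ∈ ∂D_q` for some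
`q ∈ R` (where `D_q` is the closed unit disk centered at `q`).  Let `σ` be a circle
through `p` (with center `z` and radius `ρ > 0`) such that an arc of `σ` containing
`p` in its interior lies on `∂(R ⊕ D)`.  Then `σ` and the circle `∂D_q` are tangent at
`p`, i.e. they have the same tangent line at `p`; equivalently the radii `p - z` and
`p - q` are parallel. -/
lemma expand_aux {E : Type*} [NormedAddCommGroup E] [InnerProductSpace ℝ E]
    (a b w : E) (s t : ℝ) (hab : ⟪a, b⟫ = 0) :
    ‖s • a + t • b + w‖ ^ 2 =
      s ^ 2 * ‖a‖ ^ 2 + t ^ 2 * ‖b‖ ^ 2 + ‖w‖ ^ 2 + 2 * s * ⟪a, w⟫ + 2 * t * ⟪b, w⟫ := by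
  have hba : ⟪b, a⟫ = 0 := by rw [real_inner_comm]; exact hab
  rw [← real_inner_self_eq_norm_sq, ← real_inner_self_eq_norm_sq a,
    ← real_inner_self_eq_norm_sq b, ← real_inner_self_eq_norm_sq w]
  simp only [inner_add_left, inner_add_right, real_inner_smul_left, real_inner_smul_right,
    real_inner_comm w a, real_inner_comm w b, hab, hba]
  ring

theorem stmt7 (R : Set Pt) (q : Pt) (hq : q ∈ R) (p : Pt)
    (hp : p ∈ frontier (R + unitDisk)) (hpq : ‖p - q‖ = 1)
    (z : Pt) (ρ : ℝ) (hρ : 0 < ρ) (hpz : p ∈ Metric.sphere z ρ)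
    (harc : ∃ U ∈ nhds p, Metric.sphere z ρ ∩ U ⊆ frontier (R + unitDisk)) :
    ∃ t : ℝ, p - z = t • (p - q) := by
  obtain ⟨U, hU, hUsub⟩ := harc
  set a : Pt := p - z with ha
  set b : Pt := (EuclideanSpace.equiv (Fin 2) ℝ).symm ![-(a 1), a 0] with hb
  have hb0 : b 0 = -(a 1) := rfl
  have hb1 : b 1 = a 0 := rfl
  clear_value b
  have hab : ⟪a, b⟫ = 0 := by
    simp [PiLp.inner_apply, Fin.sum_univ_two, hb0, hb1]; ring
  have hnorma : ‖a‖ = ρ := by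
    simpa [ha, Metric.mem_sphere, dist_eq_norm] using hpz
  have haa : ⟪a, a⟫ = ρ ^ 2 := by
    rw [real_inner_self_eq_norm_sq, hnorma]
  have hbb : ⟪b, b⟫ = ρ ^ 2 := by
    have : ⟪b, b⟫ = ⟪a, a⟫ := by
      simp only [PiLp.inner_apply, Fin.sum_univ_two, hb0, hb1, RCLike.inner_apply, conj_trivial]; ring
    rw [this, haa]
  have hb_norm : ‖b‖ = ρ := by
    have h := real_inner_self_eq_norm_sq b
    rw [hbb] at h
    nlinarith [norm_nonneg b]
  -- the curve on the sphere
  set c : ℝ → Pt := fun θ => z + Real.cos θ • a + Real.sin θ • b with hc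
  clear_value c
  have hc0 : c 0 = p := by
    rw [hc]
    simp only [Real.cos_zero, Real.sin_zero, one_smul, zero_smul, add_zero, ha]
    abel
  have hcont : Continuous c := by
    rw [hc]
    exact (continuous_const.add ((Real.continuous_cos).smul continuous_const)).add
      ((Real.continuous_sin).smul continuous_const)
  have hba : ⟪b, a⟫ = 0 := by rw [real_inner_comm]; exact hab
  have hsphere : ∀ θ, c θ ∈ Metric.sphere z ρ := by
    intro θ
    have h1 : ‖c θ - z‖ ^ 2 = ρ ^ 2 := by
      have hd : c θ - z = Real.cos θ • a + Real.sin θ • b + 0 := by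
        simp only [hc]; abel
      rw [hd, expand_aux a b 0 _ _ hab, hnorma, hb_norm]
      simp only [inner_zero_right, norm_zero]
      linear_combination ρ ^ 2 * Real.sin_sq_add_cos_sq θ
    have := norm_nonneg (c θ - z)
    have : ‖c θ - z‖ = ρ := by nlinarith
    simpa [Metric.mem_sphere, dist_eq_norm] using this
  -- ball q 1 is in the interior
  have hball : Metric.ball q 1 ⊆ interior (R + unitDisk) := by
    have hsub : Metric.closedBall q 1 ⊆ R + unitDisk := by
      intro x hx
      refine ⟨q, hq, x - q, ?_, by module⟩
      simpa [unitDisk, Metric.mem_closedBall, dist_eq_norm] using Metric.mem_closedBall.mp hx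
    calc Metric.ball q 1 = interior (Metric.closedBall q 1) :=
          (interior_closedBall q one_ne_zero).symm
      _ ⊆ interior (R + unitDisk) := interior_mono hsub
  -- points of the curve near 0 avoid the open ball
  have hfar : ∀ᶠ θ in nhds (0:ℝ), 1 ≤ ‖c θ - q‖ := by
    have hcU : c ⁻¹' U ∈ nhds (0:ℝ) := by
      apply hcont.continuousAt.preimage_mem_nhds
      rw [hc0]; exact hU
    filter_upwards [hcU] with θ hθ
    have hfr : c θ ∈ frontier (R + unitDisk) := hUsub ⟨hsphere θ, hθ⟩
    have hnotint : c θ ∉ interior (R + unitDisk) := hfr.2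
    have : c θ ∉ Metric.ball q 1 := fun h => hnotint (hball h)
    simpa [Metric.mem_ball, dist_eq_norm, not_lt] using this
  -- the function g
  set A : ℝ := ⟪a, z - q⟫ with hA
  set B : ℝ := ⟪b, z - q⟫ with hB
  clear_value A B
  have hexpand : ∀ θ, ‖c θ - q‖ ^ 2 = ρ ^ 2 + ‖z - q‖ ^ 2 + 2 * Real.cos θ * A + 2 * Real.sin θ * B := by
    intro θ
    have hdecomp : c θ - q = Real.cos θ • a + Real.sin θ • b + (z - q) := by
      simp only [hc]; abel
    rw [hdecomp, expand_aux a b (z - q) _ _ hab, hnorma, hb_norm]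
    rw [← hA, ← hB]
    linear_combination ρ ^ 2 * Real.sin_sq_add_cos_sq θ
  set g : ℝ → ℝ := fun θ => 2 * Real.cos θ * A + 2 * Real.sin θ * B with hg
  clear_value g
  have hmin : IsLocalMin g 0 := by
    unfold IsLocalMin IsMinFilter
    filter_upwards [hfar] with θ hθ
    have h1 : ‖c θ - q‖ ^ 2 ≥ 1 := by nlinarith [hθ, norm_nonneg (c θ - q)]
    have h0 : ‖c 0 - q‖ ^ 2 = 1 := by rw [hc0, hpq]; norm_num
    have e1 := hexpand θ
    have e0 := hexpand 0
    rw [h0] at e0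
    simp only [Real.cos_zero, Real.sin_zero, mul_one, mul_zero, zero_mul, add_zero] at e0
    simp only [hg, Real.cos_zero, Real.sin_zero, mul_one, mul_zero, zero_mul, add_zero]
    linarith [e1, h1]
  have hderiv : HasDerivAt g (2 * B) 0 := by
    have h1 : HasDerivAt (fun θ => 2 * Real.cos θ * A) 0 0 := by
      have := (Real.hasDerivAt_cos 0).const_mul 2 |>.mul_const A
      simpa using this
    have h2 : HasDerivAt (fun θ => 2 * Real.sin θ * B) (2 * B) 0 := by
      have := (Real.hasDerivAt_sin 0).const_mul 2 |>.mul_const B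
      simpa using this
    have h3 := h1.add h2; rw [zero_add] at h3; rw [hg]; exact h3
  have hB0 : B = 0 := by
    have := hmin.hasDerivAt_eq_zero hderiv
    linarith
  -- so ⟪b, p - q⟫ = 0
  have hkey : ⟪b, p - q⟫ = 0 := by
    have hthis : p - q = a + (z - q) := by rw [ha]; abel
    rw [hthis, inner_add_right, hba, ← hB, hB0]
    norm_num
  -- translate to coordinates
  set u : Pt := p - q with hu
  have hcross : a 0 * u 1 = a 1 * u 0 := by
    have hbu : ⟪b, u⟫ = b 0 * u 0 + b 1 * u 1 := by
      simp [PiLp.inner_apply, Fin.sum_univ_two]; ring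
    rw [hbu, hb0, hb1] at hkey
    linarith
  have hsum : u 0 * u 0 + u 1 * u 1 = 1 := by
    have h := real_inner_self_eq_norm_sq u
    rw [hpq] at h
    simp only [PiLp.inner_apply, Fin.sum_univ_two, RCLike.inner_apply, conj_trivial] at h; linarith
  have hcomp : u 0 ≠ 0 ∨ u 1 ≠ 0 := by
    by_contra hcon
    push_neg at hcon
    rw [hcon.1, hcon.2] at hsum
    norm_num at hsum
  clear_value a u
  rcases hcomp with h0 | h1
  · refine ⟨a 0 / u 0, ?_⟩
    ext i
    fin_cases i
    · simp only [Fin.zero_eta, Fin.mk_one, PiLp.smul_apply, smul_eq_mul]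
      field_simp
    · simp only [Fin.zero_eta, Fin.mk_one, PiLp.smul_apply, smul_eq_mul]
      field_simp
      linarith [hcross]
  · refine ⟨a 1 / u 1, ?_⟩
    ext i
    fin_cases i
    · simp only [Fin.zero_eta, Fin.mk_one, PiLp.smul_apply, smul_eq_mul]
      field_simp
      linarith [hcross]
    · simp only [Fin.zero_eta, Fin.mk_one, PiLp.smul_apply, smul_eq_mul]
      field_simp
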